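/- Let R be a commutative ring and (a,b) a regular sequence. Then the quotient R[w₁,w₂]/(b·w₁ − a·w₂) is an integral domain whenever R is an integral domain, and more generally b·w₁ − a·w₂ is a prime element of R[w₁, w₂] when R is a UFD and a, b are coprime nonzero elements. -/

import Mathlib

open MvPolynomial Pointwise

open Polynomial in
lemma aux_pseudoDiv {A : Type*} [CommRing A] (u v : A) :
    ∀ (N : ℕ) (f : A[X]), f.natDegree ≤ N →
      ∃ (n : ℕ) (q : A[X]) (r : A),
        Polynomial.C u ^ n * f =
          (Polynomial.C u * Polynomial.X - Polynomial.C v) * q + Polynomial.C r := by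
  intro N
  induction N with
  | zero =>
      intro f hf
      exact ⟨0, 0, f.coeff 0, by
        nth_rewrite 1 [Polynomial.eq_C_of_natDegree_le_zero hf]; ring⟩
  | succ N ih =>
      intro f hf
      by_cases hle : f.natDegree ≤ N
      · exact ih f hle
      have hdeg : f.natDegree = N + 1 := le_antisymm hf (not_le.mp hle)
      set g : A[X] :=
        Polynomial.C u * f -
          Polynomial.C f.leadingCoeff * Polynomial.X ^ N *
            (Polynomial.C u * Polynomial.X - Polynomial.C v) with hg
      have hexp : g = Polynomial.C u * f -
          (Polynomial.C (f.leadingCoeff * u) * Polynomial.X ^ (N + 1) -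
            Polynomial.C (f.leadingCoeff * v) * Polynomial.X ^ N) := by
        rw [hg, map_mul, map_mul, pow_succ]; ring
      have hgdeg : g.natDegree ≤ N := by
        apply Polynomial.natDegree_le_iff_coeff_eq_zero.mpr
        intro k hk
        rw [hexp]
        simp only [Polynomial.coeff_sub, Polynomial.coeff_C_mul, Polynomial.coeff_X_pow]
        rcases eq_or_lt_of_le (Nat.succ_le_of_lt hk) with h | h
        · have hk1 : k = N + 1 := by omega
          have hfk : f.coeff k = f.leadingCoeff := by
            rw [hk1, ← hdeg]; exact Polynomial.coeff_natDegree
          rw [hfk, if_pos hk1, if_neg (by omega)]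
          ring
        · have hfk : f.coeff k = 0 :=
            Polynomial.coeff_eq_zero_of_natDegree_lt (by omega)
          rw [hfk, if_neg (by omega), if_neg (by omega)]
          ring
      obtain ⟨m, q, r, h⟩ := ih g hgdeg
      refine ⟨m + 1, q + Polynomial.C u ^ m * Polynomial.C f.leadingCoeff * Polynomial.X ^ N,
        r, ?_⟩
      have h2 : Polynomial.C u * f = g +
          Polynomial.C f.leadingCoeff * Polynomial.X ^ N *
            (Polynomial.C u * Polynomial.X - Polynomial.C v) := by
        rw [hg]; ring
      calc Polynomial.C u ^ (m + 1) * f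
          = Polynomial.C u ^ m * (Polynomial.C u * f) := by ring
        _ = Polynomial.C u ^ m * g +
            Polynomial.C u ^ m * (Polynomial.C f.leadingCoeff * Polynomial.X ^ N *
              (Polynomial.C u * Polynomial.X - Polynomial.C v)) := by rw [h2]; ring
        _ = _ := by rw [h]; ring

open Polynomial in
lemma aux_primeLinear {A : Type*} [CommRing A] [IsDomain A] (u v : A) (hu : u ≠ 0)
    (hv : ∀ s : A, u ∣ v * s → u ∣ s) :
    Prime (Polynomial.C u * Polynomial.X - Polynomial.C v : A[X]) := by
  set P : A[X] := Polynomial.C u * Polynomial.X - Polynomial.C v with hP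
  have hCu : (Polynomial.C u : A[X]) ≠ 0 := by
    simpa using hu
  have hP0 : P ≠ 0 := by
    intro h
    have h1 := congrArg (fun p : A[X] => p.coeff 1) h
    simp [hP, Polynomial.coeff_C] at h1
    exact hu h1
  let K := FractionRing A
  have hinj : Function.Injective (algebraMap A K) := IsFractionRing.injective A K
  let φ : A[X] →+* K :=
    Polynomial.eval₂RingHom (algebraMap A K) (algebraMap A K v / algebraMap A K u)
  have hu' : algebraMap A K u ≠ 0 := fun h => hu (hinj (by simpa using h))
  have hφP : φ P = 0 := by
    show Polynomial.eval₂ (algebraMap A K) _ P = 0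
    rw [hP]
    simp only [Polynomial.eval₂_sub, Polynomial.eval₂_mul, Polynomial.eval₂_C,
      Polynomial.eval₂_X]
    rw [mul_comm, div_mul_cancel₀ _ hu', sub_self]
  have hdesc : ∀ g : A[X], Polynomial.C u * g ∈ Ideal.span {P} → g ∈ Ideal.span {P} := by
    intro g hg
    rw [Ideal.mem_span_singleton] at hg ⊢
    obtain ⟨h, hh⟩ := hg
    have hdvd : Polynomial.C u ∣ h := by
      rw [Polynomial.C_dvd_iff_dvd_coeff]
      intro k
      apply hv
      have hk' : u * g.coeff k =
          u * (Polynomial.X * h).coeff k - v * h.coeff k := by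
        have := congrArg (fun p : A[X] => p.coeff k) hh
        simpa [hP, sub_mul, mul_assoc, Polynomial.coeff_sub, Polynomial.coeff_C_mul]
          using this
      exact ⟨(Polynomial.X * h).coeff k - g.coeff k, by linear_combination hk'⟩
    obtain ⟨h', rfl⟩ := hdvd
    refine ⟨h', mul_left_cancel₀ hCu ?_⟩
    rw [hh]; ring
  have key : ∀ (n : ℕ) (f : A[X]),
      Polynomial.C u ^ n * f ∈ Ideal.span {P} → f ∈ Ideal.span {P} := by
    intro n
    induction n with
    | zero => intro f h; simpa using h
    | succ n ihn =>
        intro f h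
        apply ihn
        apply hdesc
        have : Polynomial.C u * (Polynomial.C u ^ n * f) =
            Polynomial.C u ^ (n + 1) * f := by ring
        rw [this]; exact h
  have hker : Ideal.span {P} = RingHom.ker φ := by
    apply le_antisymm
    · rw [Ideal.span_le, Set.singleton_subset_iff]
      exact hφP
    · intro f hf
      obtain ⟨n, q, r, hr⟩ := aux_pseudoDiv u v f.natDegree f le_rfl
      have hφr : φ (Polynomial.C r) = 0 := by
        have h1 := congrArg φ hr
        rw [map_mul, map_add, map_mul, hφP, RingHom.mem_ker.mp hf] at h1
        simpa using h1.symm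
      have hr0 : r = 0 := by
        apply hinj
        have : Polynomial.eval₂ (algebraMap A K)
            (algebraMap A K v / algebraMap A K u) (Polynomial.C r) = 0 := hφr
        rw [Polynomial.eval₂_C] at this
        simpa using this
      apply key n f
      rw [Ideal.mem_span_singleton]
      exact ⟨q, by rw [hr, hr0]; simp [hP]⟩
  have hprime : (Ideal.span {P}).IsPrime := hker ▸ RingHom.ker_isPrime φ
  exact (Ideal.span_singleton_prime hP0).mp hprime

/-- For `(a, b)` a regular sequence in an integral domain `R`, the quotient
`R[w₁,w₂]/(b·w₁ − a·w₂)` is an integral domain; more generally, if `R` is a UFD and `a, b`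
are coprime nonzero elements, then `b·w₁ − a·w₂` is a prime element of `R[w₁, w₂]`. -/
theorem stmt19 (R : Type*) [CommRing R] [IsDomain R] (a b : R)
    (hreg : RingTheory.Sequence.IsRegular R [a, b]) :
    IsDomain (MvPolynomial (Fin 2) R ⧸
        Ideal.span {(C b * X 0 - C a * X 1 : MvPolynomial (Fin 2) R)}) ∧
      (UniqueFactorizationMonoid R → IsRelPrime a b → a ≠ 0 → b ≠ 0 →
        Prime (C b * X 0 - C a * X 1 : MvPolynomial (Fin 2) R)) := by
  classical
  obtain ⟨hw, htop⟩ := hreg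
  rw [RingTheory.Sequence.isWeaklyRegular_cons_iff] at hw
  obtain ⟨ha, hw2⟩ := hw
  rw [RingTheory.Sequence.isWeaklyRegular_singleton_iff] at hw2
  have ha0 : a ≠ 0 := by
    rintro rfl
    exact one_ne_zero (ha (show (0 : R) • 1 = 0 • 0 by simp))
  have hmem : ∀ r : R, r ∈ a • (⊤ : Submodule R R) ↔ a ∣ r := by
    intro r
    constructor
    · intro h
      rw [← SetLike.mem_coe, Submodule.coe_pointwise_smul] at h
      obtain ⟨m, -, rfl⟩ := h
      exact ⟨m, (smul_eq_mul a m).symm⟩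
    · rintro ⟨s, rfl⟩
      have := Submodule.smul_mem_pointwise_smul s a (⊤ : Submodule R R) trivial
      simpa [smul_eq_mul] using this
  have hba : ∀ r t : R, b * r = a * t → a ∣ r := by
    intro r t h
    have h1 : (b • (Submodule.Quotient.mk r : QuotSMulTop a R)) = b • 0 := by
      rw [smul_zero, ← Submodule.Quotient.mk_smul, Submodule.Quotient.mk_eq_zero]
      rw [smul_eq_mul, h]
      exact (hmem _).mpr ⟨t, rfl⟩
    have h2 := hw2 h1
    exact (hmem r).mp ((Submodule.Quotient.mk_eq_zero _).mp h2)
  have hb0 : b ≠ 0 := by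
    rintro rfl
    obtain ⟨s, hs⟩ := hba 1 0 (by ring)
    apply htop
    have hTop : Ideal.ofList [a, (0 : R)] = ⊤ :=
      Ideal.eq_top_of_isUnit_mem _ (Ideal.subset_span (by simp))
        (isUnit_of_dvd_one ⟨s, hs⟩)
    rw [hTop, Submodule.top_smul]
  have hab : ∀ c : R, b ∣ a * c → b ∣ c := by
    rintro c ⟨t, ht⟩
    obtain ⟨s, hs⟩ := hba t c ht.symm
    refine ⟨s, mul_left_cancel₀ ha0 ?_⟩
    rw [ht, hs]; ring
  have hvA : ∀ s : MvPolynomial (Fin 1) R,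
      (C b : MvPolynomial (Fin 1) R) ∣ (C a * X 0) * s → C b ∣ s := by
    intro s hs
    rw [MvPolynomial.C_dvd_iff_dvd_coeff]
    intro m
    apply hab
    have h1 := (MvPolynomial.C_dvd_iff_dvd_coeff b _).mp hs (Finsupp.single 0 1 + m)
    rwa [mul_assoc, MvPolynomial.coeff_C_mul, MvPolynomial.coeff_X_mul] at h1
  have hCb0 : (C b : MvPolynomial (Fin 1) R) ≠ 0 := fun h =>
    hb0 (MvPolynomial.C_injective (Fin 1) R (by simpa using h))
  have hprimeP : Prime (Polynomial.C (C b : MvPolynomial (Fin 1) R) * Polynomial.X -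
      Polynomial.C (C a * X 0)) := aux_primeLinear _ _ hCb0 hvA
  have hC : ∀ c : R, MvPolynomial.finSuccEquiv R 1 (C c) = Polynomial.C (C c) := by
    intro c
    simp [MvPolynomial.finSuccEquiv_apply]
  have h1 : (X (1 : Fin 2) : MvPolynomial (Fin 2) R) = X (Fin.succ 0) := by
    congr 1
  have he : (MvPolynomial.finSuccEquiv R 1) (C b * X 0 - C a * X 1) =
      Polynomial.C (C b : MvPolynomial (Fin 1) R) * Polynomial.X -
        Polynomial.C (C a * X 0) := by
    rw [map_sub, map_mul, map_mul, h1, MvPolynomial.finSuccEquiv_X_zero,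
      MvPolynomial.finSuccEquiv_X_succ, hC, hC, map_mul]
  have hp : Prime (C b * X 0 - C a * X 1 : MvPolynomial (Fin 2) R) := by
    rw [← MulEquiv.prime_iff (MvPolynomial.finSuccEquiv R 1)]
    show Prime ((MvPolynomial.finSuccEquiv R 1) (C b * X 0 - C a * X 1))
    rw [he]
    exact hprimeP
  refine ⟨?_, fun _ _ _ _ => hp⟩
  rw [Ideal.Quotient.isDomain_iff_prime]
  exact (Ideal.span_singleton_prime hp.ne_zero).mpr hp
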